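/- Let μ be a welfare-maximizing matching of passengers to taxicabs. If b₁, b₂ ∈ B are two passengers at the same location (loc(b₁) = loc(b₂)) such that b₁ is matched (μ(b₁) ≠ ∅) and b₂ is unmatched (μ(b₂) = ∅), then val(b₁) ≥ val(b₂). That is, in a welfare-maximizing matching, higher-valued passengers at a location are served before lower-valued passengers at the same location. -/

import Mathlib

/-- A matching of passengers to taxicabs: injective on the set of matched passengers. -/
def IsMatching {B T : Type*} (μ : B → Option T) : Prop :=
  ∀ b₁ b₂ t, μ b₁ = some t → μ b₂ = some t → b₁ = b₂

/-- The welfare of a matching: the sum over matched passengers of value minus distance. -/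
noncomputable def welfare {V B T : Type*} [Fintype B] (ℓ : V → V → ℝ)
    (locB : B → V) (locT : T → V) (val : B → ℝ) (μ : B → Option T) : ℝ :=
  ∑ b, (μ b).elim 0 (fun t => val b - ℓ (locB b) (locT t))

/-- in a welfare-maximizing matching, if passengers `b₁, b₂` are at the same
location, `b₁` is matched and `b₂` is unmatched, then `val b₂ ≤ val b₁`. -/
theorem stmt8 {V B T : Type*} [Fintype V] [Nonempty V] [DecidableEq V]
    [Fintype B] [Fintype T] [Nonempty T]
    (ℓ : V → V → ℝ)
    (hl0 : ∀ u, ℓ u u = 0) (hlsymm : ∀ u v, ℓ u v = ℓ v u)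
    (hlnn : ∀ u v, 0 ≤ ℓ u v) (hltri : ∀ u v w, ℓ u w ≤ ℓ u v + ℓ v w)
    (locB : B → V) (locT : T → V) (val : B → ℝ) (hval : ∀ b, 0 ≤ val b)
    (μ : B → Option T) (hμ : IsMatching μ)
    (hmax : ∀ μ' : B → Option T, IsMatching μ' →
      welfare ℓ locB locT val μ' ≤ welfare ℓ locB locT val μ)
    (b₁ b₂ : B) (hloc : locB b₁ = locB b₂)
    (h₁ : μ b₁ ≠ none) (h₂ : μ b₂ = none) :
    val b₂ ≤ val b₁ := by
  classical
  obtain ⟨t, ht⟩ := Option.ne_none_iff_exists'.mp h₁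
  have hne : b₁ ≠ b₂ := by
    intro h; rw [h, h₂] at ht; exact Option.some_ne_none t ht.symm
  set μ' : B → Option T := fun b => if b = b₂ then some t else if b = b₁ then none else μ b
    with hμ'def
  have hμ' : IsMatching μ' := by
    intro x y s hx hy
    simp only [μ'] at hx hy
    by_cases hx2 : x = b₂ <;> by_cases hy2 : y = b₂
    · rw [hx2, hy2]
    · simp only [hx2, if_pos, hy2, if_neg, not_false_iff] at hx hy
      by_cases hy1 : y = b₁
      · simp [hy1] at hy
      · simp only [hy1, if_neg, not_false_iff] at hy
        exfalso
        have : y = b₁ := hμ y b₁ s hy (hx ▸ ht)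
        exact hy1 this
    · simp only [hx2, hy2, if_neg, not_false_iff, if_pos] at hx hy
      by_cases hx1 : x = b₁
      · simp [hx1] at hx
      · simp only [hx1, if_neg, not_false_iff] at hx
        exfalso
        exact hx1 (hμ x b₁ s hx (hy ▸ ht))
    · simp only [hx2, hy2, if_neg, not_false_iff] at hx hy
      by_cases hx1 : x = b₁
      · simp [hx1] at hx
      · by_cases hy1 : y = b₁
        · simp [hy1] at hy
        · simp only [hx1, hy1, if_neg, not_false_iff] at hx hy
          exact hμ x y s hx hy
  have hle := hmax μ' hμ'
  set f : B → ℝ := fun b => (μ b).elim 0 (fun s => val b - ℓ (locB b) (locT s)) with hf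
  set g : B → ℝ := fun b => (μ' b).elim 0 (fun s => val b - ℓ (locB b) (locT s)) with hg
  have hdiff : ∑ b, (f b - g b) = val b₁ - val b₂ := by
    have hsupp : ∀ b ∈ (Finset.univ : Finset B), b ∉ ({b₁, b₂} : Finset B) → f b - g b = 0 := by
      intro b _ hb
      simp only [Finset.mem_insert, Finset.mem_singleton, not_or] at hb
      simp [f, g, μ', hb.1, hb.2]
    rw [← Finset.sum_subset (Finset.subset_univ ({b₁, b₂} : Finset B)) hsupp,
      Finset.sum_pair hne]
    have hfb₁ : f b₁ = val b₁ - ℓ (locB b₁) (locT t) := by simp [f, ht]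
    have hgb₁ : g b₁ = 0 := by simp [g, μ', hne]
    have hfb₂ : f b₂ = 0 := by simp [f, h₂]
    have hgb₂ : g b₂ = val b₂ - ℓ (locB b₂) (locT t) := by simp [g, μ']
    rw [hfb₁, hgb₁, hfb₂, hgb₂, hloc]
    ring
  have : (0:ℝ) ≤ ∑ b, (f b - g b) := by
    rw [Finset.sum_sub_distrib]
    exact sub_nonneg.mpr hle
  linarith [hdiff ▸ this]
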